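/- There exist δ > 0 and constants 0 < c ≤ C such that for every holomorphic function ψ on 𝔻 satisfying ∬_𝔻 |ψ(z)|² dA(z) < δ, one has c · ∬_𝔻 |ψ(z)|² dA(z) ≤ ∬_𝔻 (1 − |z|²)² |ψ'(z) − ψ(z)²/2|² dA(z) + |ψ(0)|² ≤ C · ∬_𝔻 |ψ(z)|² dA(z). (Here, when ψ = f''/f' is the pre-Schwarzian of a locally injective holomorphic map f, the quantity ψ' − ψ²/2 is the Schwarzian derivative of f; the statement says that near the origin the weighted L² Schwarzian norm together with the value of the pre-Schwarzian at 0 is comparable to the Bergman L² norm of the pre-Schwarzian.) -/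

import Mathlib

open MeasureTheory Metric


open Set Real Filter
open scoped Real ENNReal NNReal Topology ComplexConjugate


lemma complex_polar_symm_eq (p : ℝ × ℝ) :
    Complex.measurableEquivRealProd.symm (polarCoord.symm p)
      = ↑p.1 * Complex.exp (↑p.2 * Complex.I) := by
  rw [Complex.exp_mul_I]
  apply Complex.ext <;>
    simp [Complex.measurableEquivRealProd_symm_apply, polarCoord,
      Complex.cos_ofReal_re, Complex.sin_ofReal_re, Complex.add_re, Complex.add_im,
      Complex.mul_re, Complex.mul_im, Complex.cos_ofReal_im, Complex.sin_ofReal_im]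

lemma lintegral_ball_polar (g : ℂ → ℝ≥0∞) :
    ∫⁻ z in ball (0:ℂ) 1, g z
      = ∫⁻ p in Ioo (0:ℝ) 1 ×ˢ Ioo (-π) π,
          ENNReal.ofReal p.1 * g (↑p.1 * Complex.exp (↑p.2 * Complex.I)) := by
  have e := Complex.measurableEquivRealProd
  have hmp : MeasurePreserving (Complex.measurableEquivRealProd.symm) volume volume :=
    Complex.volume_preserving_equiv_real_prod.symm Complex.measurableEquivRealProd
  have h1 : ∫⁻ z in ball (0:ℂ) 1, g z
      = ∫⁻ q in Complex.measurableEquivRealProd.symm ⁻¹' (ball (0:ℂ) 1),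
          g (Complex.measurableEquivRealProd.symm q) :=
    (hmp.setLIntegral_comp_preimage_emb
      (MeasurableEquiv.measurableEmbedding _) g _).symm
  set D := Complex.measurableEquivRealProd.symm ⁻¹' (ball (0:ℂ) 1) with hD
  set s := Ioo (0:ℝ) 1 ×ˢ Ioo (-π) π with hs
  have hsm : MeasurableSet s := (measurableSet_Ioo).prod measurableSet_Ioo
  set B : ℝ × ℝ → ℝ × ℝ →L[ℝ] ℝ × ℝ := fun p =>
    LinearMap.toContinuousLinearMap (Matrix.toLin (Module.Basis.finTwoProd ℝ) (Module.Basis.finTwoProd ℝ)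
      !![Real.cos p.2, -p.1 * Real.sin p.2; Real.sin p.2, p.1 * Real.cos p.2]) with hB
  have B_det : ∀ p, (B p).det = p.1 := by
    intro p
    conv_rhs => rw [← one_mul p.1, ← cos_sq_add_sin_sq p.2]
    simp only [hB, neg_mul, LinearMap.det_toContinuousLinearMap, LinearMap.det_toLin,
      Matrix.det_fin_two_of, sub_neg_eq_add]
    ring
  have hf' : ∀ p ∈ s, HasFDerivWithinAt polarCoord.symm (B p) s p := fun p _ =>
    (hasFDerivAt_polarCoord_symm p).hasFDerivWithinAt
  have hst : s ⊆ polarCoord.target := by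
    rintro ⟨r, θ⟩ ⟨hr, hθ⟩
    exact ⟨mem_Ioi.2 hr.1, hθ⟩
  have hinj : InjOn polarCoord.symm s :=
    (polarCoord.symm.injOn.mono (by rw [OpenPartialHomeomorph.symm_source]; exact hst))
  have key := lintegral_image_eq_lintegral_abs_det_fderiv_mul volume hsm hf' hinj
      (fun q => g (Complex.measurableEquivRealProd.symm q))
  -- identify image with D up to null set
  have himg_sub : polarCoord.symm '' s ⊆ D := by
    rintro q ⟨p, hp, rfl⟩
    have : ‖Complex.measurableEquivRealProd.symm (polarCoord.symm p)‖ < 1 := by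
      rw [complex_polar_symm_eq]
      simp only [norm_mul, Complex.norm_real, Real.norm_eq_abs, Complex.norm_exp_ofReal_mul_I]
      rw [abs_of_pos hp.1.1, mul_one]
      exact hp.1.2
    simpa [hD, Complex.dist_eq] using this
  have hnull : volume (D \ polarCoord.symm '' s) = 0 := by
    have hsub : D \ polarCoord.symm '' s ⊆ (univ : Set ℝ) ×ˢ ({0} : Set ℝ) := by
      rintro ⟨x, y⟩ ⟨hq, hq2⟩
      by_contra hy
      simp only [mem_prod, mem_univ, true_and, mem_singleton_iff] at hy
      apply hq2
      have hsrc : (x, y) ∈ polarCoord.source := Or.inr hy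
      refine ⟨polarCoord (x, y), ?_, polarCoord.left_inv hsrc⟩
      have htgt := polarCoord.map_source hsrc
      rw [polarCoord_target] at htgt
      constructor
      · constructor
        · exact htgt.1
        · -- radius < 1
          have : ‖Complex.measurableEquivRealProd.symm (x, y)‖ < 1 := by
            simpa [hD, Complex.dist_eq] using hq
          have habs : ‖Complex.measurableEquivRealProd.symm (x, y)‖
              = √(x ^ 2 + y ^ 2) := by
            rw [Complex.norm_def]
            congr 1
            simp [Complex.measurableEquivRealProd_symm_apply, Complex.normSq_mk, sq]
          rw [habs] at this
          exact this
      · exact htgt.2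
    refine measure_mono_null hsub ?_
    rw [Measure.volume_eq_prod, Measure.prod_prod, Real.volume_singleton, mul_zero]
  have hDae : D =ᵐ[volume] polarCoord.symm '' s := by
    rw [ae_eq_set]
    exact ⟨hnull, by rw [diff_eq_empty.2 himg_sub]; simp⟩
  rw [h1, setLIntegral_congr hDae, key]
  apply setLIntegral_congr_fun hsm
  intro p hp
  dsimp only
  rw [B_det, abs_of_pos hp.1.1, complex_polar_symm_eq]

lemma integral_exp_int (k : ℤ) :
    ∫ θ in Ioo (-π) π, Complex.exp (k * θ * Complex.I)
      = if k = 0 then (2 * π : ℂ) else 0 := by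
  have hle : (-π : ℝ) ≤ π := by linarith [Real.pi_pos]
  rw [← MeasureTheory.integral_Ioc_eq_integral_Ioo,
    ← intervalIntegral.integral_of_le hle]
  rcases eq_or_ne k 0 with rfl | hk
  · simp only [Int.cast_zero, zero_mul, Complex.exp_zero, if_pos rfl]
    rw [intervalIntegral.integral_const]
    simp [Complex.real_smul]
    ring
  · rw [if_neg hk]
    have hc : (k : ℂ) * Complex.I ≠ 0 := by
      simp [Complex.ext_iff, Int.cast_eq_zero, hk]
    have : ∀ θ : ℝ, (k : ℂ) * θ * Complex.I = ((k : ℂ) * Complex.I) * θ := by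
      intro θ; ring
    simp_rw [this]
    rw [integral_exp_mul_complex hc]
    have h1 : Complex.exp ((k:ℂ) * Complex.I * (π:ℝ)) = (-1 : ℂ) ^ k := by
      rw [show (k:ℂ) * Complex.I * (π:ℝ) = k * ((π:ℝ) * Complex.I) by ring,
        Complex.exp_int_mul, Complex.exp_pi_mul_I]
    have h2 : Complex.exp ((k:ℂ) * Complex.I * ((-π:ℝ))) = (-1 : ℂ) ^ (-k) := by
      rw [show (k:ℂ) * Complex.I * ((-π:ℝ)) = ((-k : ℤ) : ℂ) * ((π:ℝ) * Complex.I) by push_cast; ring,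
        Complex.exp_int_mul, Complex.exp_pi_mul_I]
    rw [h1, h2]
    rw [zpow_neg]
    have : ((-1 : ℂ) ^ k)⁻¹ = (-1 : ℂ) ^ k := by
      rcases Int.even_or_odd k with he | ho
      · rw [he.neg_one_zpow]; norm_num
      · rw [Odd.neg_one_zpow ho]; norm_num
    rw [this, sub_self, zero_div]

lemma circle_parseval {f : ℝ → ℂ} {a : ℕ → ℂ} {r : ℝ} (h0 : 0 ≤ r)
    (hfc : Continuous f)
    (hsum : Summable (fun n => ‖a n‖ * r ^ n))
    (hf : ∀ θ : ℝ, HasSum (fun n => a n * (↑r * Complex.exp (↑θ * Complex.I)) ^ n) (f θ)) :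
    ∫ θ in Ioo (-π) π, (‖f θ‖ ^ 2 : ℝ) = 2 * π * ∑' n, ‖a n‖ ^ 2 * r ^ (2 * n) := by
  have hpi := Real.pi_pos
  set μ := volume.restrict (Ioo (-π) π) with hμ
  have hvol : volume (Ioo (-π) π) = ENNReal.ofReal (2 * π) := by
    rw [Real.volume_Ioo]; congr 1; ring
  set G : ℕ → ℝ → ℂ := fun m θ => a m * ↑r ^ m * Complex.exp (m * θ * Complex.I) with hG
  have hGnorm : ∀ m θ, ‖G m θ‖ = ‖a m‖ * r ^ m := by
    intro m θ
    have h : Complex.exp ((m : ℂ) * θ * Complex.I)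
        = Complex.exp (((m * θ : ℝ) : ℂ) * Complex.I) := by push_cast; ring_nf
    rw [hG]
    simp only [norm_mul, h, Complex.norm_exp_ofReal_mul_I, mul_one, norm_pow,
      Complex.norm_real, Real.norm_eq_abs, abs_of_nonneg h0]
  have hg : ∀ θ : ℝ, HasSum (fun m => G m θ) (f θ) := by
    intro θ
    have h : (fun m => G m θ) = (fun m => a m * (↑r * Complex.exp (↑θ * Complex.I)) ^ m) := by
      funext m
      rw [mul_pow, ← Complex.exp_nat_mul,
        show ((m : ℕ) : ℂ) * (↑θ * Complex.I) = (m : ℂ) * ↑θ * Complex.I from by ring]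
      ring
    rw [h]
    exact hf θ
  set M : ℝ := ∑' n, ‖a n‖ * r ^ n with hM
  have hfM : ∀ θ, ‖f θ‖ ≤ M := by
    intro θ
    rw [← (hg θ).tsum_eq]
    refine (norm_tsum_le_tsum_norm ?_).trans_eq ?_
    · simpa only [hGnorm] using hsum
    · simp only [hGnorm, hM]
  have hMnn : 0 ≤ M := tsum_nonneg fun n => by positivity
  have hGmeas : ∀ m, AEStronglyMeasurable (fun θ => G m θ) μ := by
    intro m
    apply Continuous.aestronglyMeasurable
    exact continuous_const.mul (Complex.continuous_exp.comp
      ((continuous_const.mul Complex.continuous_ofReal).mul continuous_const))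
  have interchange : ∀ (h : ℝ → ℂ) (c : ℝ), 0 ≤ c → Continuous h → (∀ θ, ‖h θ‖ ≤ c) →
      ∫ θ in Ioo (-π) π, (∑' m, G m θ * h θ) = ∑' m, ∫ θ in Ioo (-π) π, G m θ * h θ := by
    intro h c hc0 hc hb
    apply integral_tsum
    · exact fun m => (hGmeas m).mul hc.aestronglyMeasurable
    · have hbound : ∀ m, (∫⁻ θ, ‖G m θ * h θ‖₊ ∂μ)
          ≤ ENNReal.ofReal (‖a m‖ * r ^ m * (c * (2 * π))) := by
        intro m
        have hb2 : ∀ θ, (‖G m θ * h θ‖₊ : ℝ≥0∞) ≤ ENNReal.ofReal ((‖a m‖ * r ^ m) * c) := by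
          intro θ
          rw [← ENNReal.ofReal_coe_nnreal, coe_nnnorm]
          apply ENNReal.ofReal_le_ofReal
          rw [norm_mul, hGnorm]
          exact mul_le_mul_of_nonneg_left (hb θ) (by positivity)
        calc (∫⁻ θ, ‖G m θ * h θ‖₊ ∂μ) ≤ ∫⁻ _, ENNReal.ofReal ((‖a m‖ * r ^ m) * c) ∂μ :=
              lintegral_mono hb2
          _ = ENNReal.ofReal ((‖a m‖ * r ^ m) * c) * volume (Ioo (-π) π) := by
              rw [hμ, lintegral_const, Measure.restrict_apply_univ]
          _ ≤ ENNReal.ofReal (‖a m‖ * r ^ m * (c * (2 * π))) := by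
              rw [hvol, ← ENNReal.ofReal_mul (by positivity), mul_assoc]
      refine ne_top_of_le_ne_top ?_ (ENNReal.tsum_le_tsum hbound)
      rw [← ENNReal.ofReal_tsum_of_nonneg (fun m => by positivity)
        (hsum.mul_right (c * (2 * π)))]
      exact ENNReal.ofReal_ne_top
  have key : ∀ n : ℕ, ∫ θ in Ioo (-π) π, Complex.exp (-(n:ℂ) * θ * Complex.I) * f θ
      = 2 * π * (a n * ↑r ^ n) := by
    intro n
    have h1 : ∀ θ : ℝ, Complex.exp (-(n:ℂ) * θ * Complex.I) * f θ
        = ∑' m, G m θ * Complex.exp (-(n:ℂ) * θ * Complex.I) := by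
      intro θ
      have := ((hg θ).mul_right (Complex.exp (-(n:ℂ) * θ * Complex.I))).tsum_eq
      rw [mul_comm]
      exact this.symm
    have hexpc : Continuous fun θ : ℝ => Complex.exp (-(n:ℂ) * θ * Complex.I) :=
      Complex.continuous_exp.comp
        ((continuous_const.mul Complex.continuous_ofReal).mul continuous_const)
    have hexpb : ∀ θ : ℝ, ‖Complex.exp (-(n:ℂ) * θ * Complex.I)‖ ≤ 1 := by
      intro θ
      rw [show (-(n:ℂ)) * θ * Complex.I = ((-(n * θ) : ℝ) : ℂ) * Complex.I from by push_cast; ring,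
        Complex.norm_exp_ofReal_mul_I]
    have hterm : ∀ m : ℕ, ∫ θ in Ioo (-π) π, G m θ * Complex.exp (-(n:ℂ) * θ * Complex.I)
        = (a m * ↑r ^ m) * (if ((m:ℤ) - (n:ℤ)) = 0 then (2 * π : ℂ) else 0) := by
      intro m
      have h2 : ∀ θ : ℝ, G m θ * Complex.exp (-(n:ℂ) * θ * Complex.I)
          = (a m * ↑r ^ m) * Complex.exp ((((m:ℤ) - (n:ℤ) : ℤ) : ℂ) * θ * Complex.I) := by
        intro θ
        rw [hG]
        simp only
        rw [mul_assoc, ← Complex.exp_add]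
        congr 2
        push_cast
        ring
      rw [setIntegral_congr_fun measurableSet_Ioo (fun θ _ => h2 θ),
        integral_const_mul, integral_exp_int]
    calc ∫ θ in Ioo (-π) π, Complex.exp (-(n:ℂ) * θ * Complex.I) * f θ
        = ∫ θ in Ioo (-π) π, (∑' m, G m θ * Complex.exp (-(n:ℂ) * θ * Complex.I)) :=
          setIntegral_congr_fun measurableSet_Ioo (fun θ _ => h1 θ)
      _ = ∑' m, ∫ θ in Ioo (-π) π, G m θ * Complex.exp (-(n:ℂ) * θ * Complex.I) :=
          interchange _ 1 zero_le_one hexpc hexpb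
      _ = 2 * π * (a n * ↑r ^ n) := by
          rw [tsum_eq_single n]
          · rw [hterm n, if_pos (by ring), mul_comm]
          · intro m hm
            rw [hterm m, if_neg (by
              intro h
              apply hm
              have : (m : ℤ) = (n : ℤ) := by linarith [sub_eq_zero.mp h]
              exact_mod_cast this), mul_zero]
  -- main computation
  have hconjc : Continuous fun θ => conj (f θ) := continuous_star.comp hfc
  have hconjb : ∀ θ, ‖conj (f θ)‖ ≤ M := fun θ => by
    rw [RCLike.norm_conj]; exact hfM θ
  have hmc : ∀ z : ℂ, ((‖z‖ ^ 2 : ℝ) : ℂ) = z * conj z := fun z => by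
    rw [Complex.mul_conj, Complex.normSq_eq_norm_sq]
  have h3 : ∀ θ : ℝ, ((‖f θ‖ ^ 2 : ℝ) : ℂ) = ∑' m, G m θ * conj (f θ) := by
    intro θ
    rw [hmc (f θ)]
    exact (((hg θ).mul_right (conj (f θ))).tsum_eq).symm
  have h4 : ∀ m : ℕ, ∫ θ in Ioo (-π) π, G m θ * conj (f θ)
      = ((2 * π * (‖a m‖ ^ 2 * r ^ (2 * m)) : ℝ) : ℂ) := by
    intro m
    have h5 : ∀ θ : ℝ, G m θ * conj (f θ)
        = (a m * ↑r ^ m) * conj (Complex.exp (-(m:ℂ) * θ * Complex.I) * f θ) := by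
      intro θ
      rw [map_mul, ← Complex.exp_conj]
      have : conj (-(m:ℂ) * θ * Complex.I) = (m:ℂ) * θ * Complex.I := by
        simp [map_mul, Complex.conj_I, Complex.conj_ofReal]
      rw [this, hG]
      ring
    rw [setIntegral_congr_fun measurableSet_Ioo (fun θ _ => h5 θ),
      integral_const_mul, integral_conj, key m]
    have : conj (2 * ↑π * (a m * ↑r ^ m)) = 2 * ↑π * conj (a m * ↑r ^ m) := by
      rw [map_mul, map_mul, map_ofNat, Complex.conj_ofReal]
    rw [this, show (a m * ↑r ^ m) * (2 * ↑π * conj (a m * ↑r ^ m))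
        = 2 * ↑π * ((a m * ↑r ^ m) * conj (a m * ↑r ^ m)) from by ring,
      ← hmc (a m * ↑r ^ m)]
    have hnorm : ‖a m * (↑r : ℂ) ^ m‖ ^ 2 = ‖a m‖ ^ 2 * r ^ (2 * m) := by
      rw [norm_mul, norm_pow, Complex.norm_real, Real.norm_eq_abs, abs_of_nonneg h0,
        mul_pow, ← pow_mul, mul_comm m 2]
    rw [hnorm]
    push_cast
    ring
  have hsummable : Summable fun m => 2 * π * (‖a m‖ ^ 2 * r ^ (2 * m)) := by
    apply Summable.of_nonneg_of_le (fun m => by positivity)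
      (fun m => ?_) (hsum.mul_left (2 * π * M))
    have hle : ‖a m‖ * r ^ m ≤ M := Summable.le_tsum hsum m (fun k _ => by positivity)
    calc 2 * π * (‖a m‖ ^ 2 * r ^ (2 * m)) = 2 * π * ((‖a m‖ * r ^ m) * (‖a m‖ * r ^ m)) := by
          rw [pow_two, mul_comm 2 m, pow_mul, pow_two]; ring
      _ ≤ 2 * π * (M * (‖a m‖ * r ^ m)) := by
          apply mul_le_mul_of_nonneg_left (mul_le_mul_of_nonneg_right hle (by positivity))
            (by positivity)
      _ = 2 * π * M * (‖a m‖ * r ^ m) := by ring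
  apply Complex.ofReal_injective
  calc ((∫ θ in Ioo (-π) π, (‖f θ‖ ^ 2 : ℝ) : ℝ) : ℂ)
      = ∫ θ in Ioo (-π) π, ((‖f θ‖ ^ 2 : ℝ) : ℂ) := integral_ofReal.symm
    _ = ∫ θ in Ioo (-π) π, (∑' m, G m θ * conj (f θ)) :=
        setIntegral_congr_fun measurableSet_Ioo (fun θ _ => h3 θ)
    _ = ∑' m, ∫ θ in Ioo (-π) π, G m θ * conj (f θ) := interchange _ M hMnn hconjc hconjb
    _ = ∑' m, ((2 * π * (‖a m‖ ^ 2 * r ^ (2 * m)) : ℝ) : ℂ) := by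
        exact tsum_congr h4
    _ = ((∑' m, 2 * π * (‖a m‖ ^ 2 * r ^ (2 * m)) : ℝ) : ℂ) := (Complex.ofReal_tsum _).symm
    _ = ((2 * π * ∑' m, (‖a m‖ ^ 2 * r ^ (2 * m)) : ℝ) : ℂ) := by
        rw [tsum_mul_left]

noncomputable def pc (ψ : ℂ → ℂ) (n : ℕ) : ℂ := iteratedDeriv n ψ 0 / n.factorial

lemma pc_zero (ψ : ℂ → ℂ) : pc ψ 0 = ψ 0 := by
  simp [pc, iteratedDeriv_zero]

lemma pc_deriv (ψ : ℂ → ℂ) (n : ℕ) : pc (deriv ψ) n = (n + 1 : ℂ) * pc ψ (n + 1) := by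
  have hfac : ((n + 1).factorial : ℂ) = (n + 1 : ℂ) * (n.factorial : ℂ) := by
    rw [Nat.factorial_succ]; push_cast; ring
  rw [pc, pc, ← iteratedDeriv_succ', hfac]
  have h1 : ((n.factorial : ℂ)) ≠ 0 := by
    exact_mod_cast Nat.cast_ne_zero.2 n.factorial_ne_zero
  have h2 : ((n : ℂ) + 1) ≠ 0 := by
    have : ((n + 1 : ℕ) : ℂ) ≠ 0 := Nat.cast_ne_zero.2 (Nat.succ_ne_zero n)
    push_cast at this
    exact this
  field_simp

lemma pc_spec {ψ : ℂ → ℂ} (hψ : DifferentiableOn ℂ ψ (ball 0 1)) {r : ℝ}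
    (h0 : 0 ≤ r) (hr : r < 1) :
    Summable (fun n => ‖pc ψ n‖ * r ^ n) ∧
      ∀ θ : ℝ, HasSum (fun n => pc ψ n * (↑r * Complex.exp (↑θ * Complex.I)) ^ n)
        (ψ (↑r * Complex.exp (↑θ * Complex.I))) := by
  set R : ℝ≥0 := ⟨(r + 1) / 2, by positivity⟩ with hR
  have hRr : r < (R : ℝ) := by show r < (r + 1) / 2; linarith
  have hR1 : (R : ℝ) < 1 := by show (r + 1) / 2 < 1; linarith
  have hRpos : 0 < R := by
    rw [← NNReal.coe_lt_coe, hR]; simp only [NNReal.coe_mk, NNReal.coe_zero]; linarith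
  have hd : DifferentiableOn ℂ ψ (closedBall 0 (R : ℝ)) :=
    hψ.mono (closedBall_subset_ball (by exact_mod_cast hR1))
  have hs := hd.hasFPowerSeriesOnBall hRpos
  set p := cauchyPowerSeries ψ 0 R with hp
  have hcoeff : ∀ n, p.coeff n = pc ψ n := by
    intro n
    have h1 := hs.factorial_smul (1 : ℂ) n
    rw [FormalMultilinearSeries.apply_eq_pow_smul_coeff, one_pow, one_smul] at h1
    have h2 : iteratedFDeriv ℂ n ψ 0 (fun _ => (1 : ℂ)) = iteratedDeriv n ψ 0 := by
      rw [iteratedDeriv_eq_iteratedFDeriv]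
    rw [h2] at h1
    rw [pc, ← h1, nsmul_eq_mul]
    have : ((n.factorial : ℂ)) ≠ 0 := Nat.cast_ne_zero.2 n.factorial_ne_zero
    field_simp
  constructor
  · have hrad : (⟨r, h0⟩ : ℝ≥0) < R := by exact NNReal.coe_lt_coe.1 hRr
    have hsum := p.summable_norm_mul_pow (r := ⟨r, h0⟩)
      (lt_of_lt_of_le (ENNReal.coe_lt_coe.2 hrad) hs.r_le)
    apply Summable.of_nonneg_of_le (fun n => by positivity) (fun n => ?_) hsum
    rw [← hcoeff n]
    apply mul_le_mul_of_nonneg_right _ (by positivity)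
    have := (p n).le_opNorm (fun _ => (1 : ℂ))
    simp only [norm_one, Finset.prod_const, one_pow, mul_one] at this
    calc ‖p.coeff n‖ = ‖p n (fun _ => (1:ℂ))‖ := by
          rw [FormalMultilinearSeries.apply_eq_pow_smul_coeff, one_pow, one_smul]
      _ ≤ ‖p n‖ := this
  · intro θ
    set y : ℂ := ↑r * Complex.exp (↑θ * Complex.I) with hy
    have hynorm : ‖y‖ = r := by
      rw [hy, norm_mul, Complex.norm_real, Real.norm_eq_abs, abs_of_nonneg h0,
        Complex.norm_exp_ofReal_mul_I, mul_one]
    have hmem : y ∈ Metric.eball (0 : ℂ) R := by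
      rw [Metric.mem_eball, edist_zero_right, ← ofReal_norm, hynorm]
      exact_mod_cast ENNReal.ofReal_lt_ofReal_iff_of_nonneg h0 |>.2 hRr |>.trans_le (by
        rw [ENNReal.ofReal_coe_nnreal])
    have hsum := hs.hasSum hmem
    rw [zero_add] at hsum
    have : (fun n => p n (fun _ => y)) = (fun n => pc ψ n * y ^ n) := by
      funext n
      rw [FormalMultilinearSeries.apply_eq_pow_smul_coeff, hcoeff n, smul_eq_mul]
      ring
    rwa [this] at hsum








lemma sq_summable {c : ℕ → ℂ} {r : ℝ} (h : Summable (fun n => ‖c n‖ * r ^ n))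
    (h0 : 0 ≤ r) : Summable (fun n => ‖c n‖ ^ 2 * r ^ (2 * n)) := by
  set M := ∑' n, ‖c n‖ * r ^ n with hM
  have hMnn : 0 ≤ M := tsum_nonneg fun n => by positivity
  apply Summable.of_nonneg_of_le (fun n => by positivity) (fun n => ?_) (h.mul_left M)
  have hle : ‖c n‖ * r ^ n ≤ M := Summable.le_tsum h n (fun k _ => by positivity)
  calc ‖c n‖ ^ 2 * r ^ (2 * n) = (‖c n‖ * r ^ n) * (‖c n‖ * r ^ n) := by
        rw [pow_two, mul_comm 2 n, pow_mul, pow_two]; ring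
    _ ≤ M * (‖c n‖ * r ^ n) :=
        mul_le_mul_of_nonneg_right hle (by positivity)

lemma disk_parseval {φ : ℂ → ℂ} (hφ : DifferentiableOn ℂ φ (ball 0 1))
    {w : ℝ → ℝ} (hw : Continuous w) (hw0 : ∀ x ∈ Ioo (0:ℝ) 1, 0 ≤ w x) :
    ∫⁻ z in ball (0:ℂ) 1, ENNReal.ofReal (w ‖z‖ * ‖φ z‖ ^ 2)
      = ∑' n, ENNReal.ofReal (2 * π * ‖pc φ n‖ ^ 2
          * ∫ r in Ioo (0:ℝ) 1, r * w r * r ^ (2 * n)) := by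
  have hpi := Real.pi_pos
  -- continuity of the composed map on the strip
  have hmap : Continuous fun p : ℝ × ℝ => (↑p.1 * Complex.exp (↑p.2 * Complex.I) : ℂ) :=
    (Complex.continuous_ofReal.comp continuous_fst).mul
      (Complex.continuous_exp.comp
        ((Complex.continuous_ofReal.comp continuous_snd).mul continuous_const))
  have hnorm : ∀ p : ℝ × ℝ, 0 ≤ p.1 → ‖(↑p.1 * Complex.exp (↑p.2 * Complex.I) : ℂ)‖ = p.1 := by
    intro p hp
    rw [norm_mul, Complex.norm_real, Real.norm_eq_abs, abs_of_nonneg hp,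
      Complex.norm_exp_ofReal_mul_I, mul_one]
  have hmaps : ∀ p : ℝ × ℝ, p.1 ∈ Ioo (0:ℝ) 1 →
      (↑p.1 * Complex.exp (↑p.2 * Complex.I) : ℂ) ∈ ball (0:ℂ) 1 := by
    intro p hp
    rw [mem_ball_zero_iff, hnorm p hp.1.le]
    exact hp.2
  have hφc : ContinuousOn φ (ball (0:ℂ) 1) := hφ.continuousOn
  rw [lintegral_ball_polar]
  have hrect : MeasurableSet (Ioo (0:ℝ) 1 ×ˢ Ioo (-π) π) :=
    measurableSet_Ioo.prod measurableSet_Ioo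
  -- rewrite integrand on the rectangle
  rw [setLIntegral_congr_fun hrect ((fun p hp => by
    rw [hnorm p hp.1.1.le, ← ENNReal.ofReal_mul hp.1.1.le, ← mul_assoc]))]
  -- Tonelli
  rw [Measure.volume_eq_prod, ← Measure.prod_restrict]
  have hmeas : AEMeasurable
      (fun p : ℝ × ℝ => ENNReal.ofReal (p.1 * w p.1
        * ‖φ (↑p.1 * Complex.exp (↑p.2 * Complex.I))‖ ^ 2))
      ((volume.restrict (Ioo (0:ℝ) 1)).prod (volume.restrict (Ioo (-π) π))) := by
    rw [Measure.prod_restrict]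
    have hcont : ContinuousOn
        (fun p : ℝ × ℝ => ENNReal.ofReal (p.1 * w p.1
          * ‖φ (↑p.1 * Complex.exp (↑p.2 * Complex.I))‖ ^ 2))
        (Ioo (0:ℝ) 1 ×ˢ (univ : Set ℝ)) := by
      apply ENNReal.continuous_ofReal.comp_continuousOn
      apply ContinuousOn.mul
      · exact ((continuous_fst.mul (hw.comp continuous_fst))).continuousOn
      · apply ContinuousOn.pow
        apply ContinuousOn.norm
        apply hφc.comp hmap.continuousOn
        intro p hp
        exact hmaps p hp.1
    have := hcont.aemeasurable (μ := volume.prod volume)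
      ((measurableSet_Ioo).prod MeasurableSet.univ)
    exact this.mono_measure (Measure.restrict_mono
      (prod_mono_right (subset_univ _)) le_rfl)
  rw [lintegral_prod _ hmeas]
  -- inner integral
  have hinner : ∀ x ∈ Ioo (0:ℝ) 1,
      (∫⁻ θ in Ioo (-π) π, ENNReal.ofReal (x * w x
          * ‖φ (↑x * Complex.exp (↑θ * Complex.I))‖ ^ 2))
        = ∑' n, ENNReal.ofReal ((2 * π * ‖pc φ n‖ ^ 2) * (x * w x * x ^ (2 * n))) := by
    intro x hx
    obtain ⟨hsum, hhs⟩ := pc_spec hφ hx.1.le hx.2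
    have hfcont : Continuous fun θ : ℝ => φ (↑x * Complex.exp (↑θ * Complex.I)) := by
      apply hφc.comp_continuous
      · exact (hmap.comp (Continuous.prodMk_right x))
      · intro θ
        exact hmaps (x, θ) hx
    have hxw : 0 ≤ x * w x := mul_nonneg hx.1.le (hw0 x hx)
    have step1 : ∀ θ : ℝ, ENNReal.ofReal (x * w x
          * ‖φ (↑x * Complex.exp (↑θ * Complex.I))‖ ^ 2)
        = ENNReal.ofReal (x * w x)
          * ENNReal.ofReal (‖φ (↑x * Complex.exp (↑θ * Complex.I))‖ ^ 2) := by
      intro θ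
      rw [← ENNReal.ofReal_mul hxw]
    calc (∫⁻ θ in Ioo (-π) π, ENNReal.ofReal (x * w x
          * ‖φ (↑x * Complex.exp (↑θ * Complex.I))‖ ^ 2))
        = ENNReal.ofReal (x * w x) * ∫⁻ θ in Ioo (-π) π,
            ENNReal.ofReal (‖φ (↑x * Complex.exp (↑θ * Complex.I))‖ ^ 2) := by
          simp_rw [step1]
          rw [lintegral_const_mul' _ _ ENNReal.ofReal_ne_top]
      _ = ENNReal.ofReal (x * w x) * ENNReal.ofReal
            (∫ θ in Ioo (-π) π, ‖φ (↑x * Complex.exp (↑θ * Complex.I))‖ ^ 2) := by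
          congr 1
          rw [← ofReal_integral_eq_lintegral_ofReal]
          · exact ((hfcont.norm.pow 2).integrableOn_Icc (a := -π) (b := π)).mono_set
              Ioo_subset_Icc_self
          · exact ae_of_all _ (fun θ => by positivity)
      _ = ENNReal.ofReal (x * w x) * ENNReal.ofReal
            (2 * π * ∑' n, ‖pc φ n‖ ^ 2 * x ^ (2 * n)) := by
          rw [circle_parseval hx.1.le hfcont hsum hhs]
      _ = ENNReal.ofReal ((x * w x) * (2 * π * ∑' n, ‖pc φ n‖ ^ 2 * x ^ (2 * n))) := by
          rw [← ENNReal.ofReal_mul hxw]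
      _ = ∑' n, ENNReal.ofReal ((2 * π * ‖pc φ n‖ ^ 2) * (x * w x * x ^ (2 * n))) := by
          have hrw : (x * w x) * (2 * π * ∑' n, ‖pc φ n‖ ^ 2 * x ^ (2 * n))
              = ∑' n, (2 * π * ‖pc φ n‖ ^ 2) * (x * w x * x ^ (2 * n)) := by
            rw [← tsum_mul_left, ← tsum_mul_left]
            exact tsum_congr (fun n => by ring)
          have hnn : ∀ n : ℕ, 0 ≤ (2 * π * ‖pc φ n‖ ^ 2) * (x * w x * x ^ (2 * n)) :=
            fun n => mul_nonneg (by positivity) (mul_nonneg hxw (pow_nonneg hx.1.le _))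
          have hsumm : Summable fun n => (2 * π * ‖pc φ n‖ ^ 2) * (x * w x * x ^ (2 * n)) := by
            apply Summable.of_nonneg_of_le hnn (fun n => ?_)
              ((sq_summable hsum hx.1.le).mul_left (2 * π * (x * w x)))
            rw [show 2 * π * ‖pc φ n‖ ^ 2 * (x * w x * x ^ (2*n))
                = 2 * π * (x * w x) * (‖pc φ n‖ ^ 2 * x ^ (2*n)) from by ring]
          rw [hrw, ENNReal.ofReal_tsum_of_nonneg hnn hsumm]
    -- done inner
  rw [setLIntegral_congr_fun measurableSet_Ioo hinner]
  have hmeasn : ∀ n : ℕ, AEMeasurable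
      (fun x : ℝ => ENNReal.ofReal ((2 * π * ‖pc φ n‖ ^ 2) * (x * w x * x ^ (2 * n))))
      (volume.restrict (Ioo (0:ℝ) 1)) := by
    intro n
    exact ((ENNReal.continuous_ofReal.comp
      (continuous_const.mul ((continuous_id.mul hw).mul (continuous_pow _)))).measurable).aemeasurable
  rw [lintegral_tsum hmeasn]
  apply tsum_congr
  intro n
  rw [← ofReal_integral_eq_lintegral_ofReal]
  · rw [← integral_const_mul]
  · apply (Continuous.integrableOn_Icc (a := (0:ℝ)) (b := 1) ?_).mono_set Ioo_subset_Icc_self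
    exact continuous_const.mul ((continuous_id.mul hw).mul (continuous_pow _))
  · filter_upwards [ae_restrict_mem measurableSet_Ioo] with x hx
    have := hw0 x hx
    have h1 := hx.1.le
    positivity

lemma tsum_cauchy_schwarz {u v : ℕ → ℝ} (hu0 : ∀ n, 0 ≤ u n) (hv0 : ∀ n, 0 ≤ v n)
    (hu : Summable (fun n => u n ^ 2)) (hv : Summable (fun n => v n ^ 2)) :
    (∑' n, u n * v n) ^ 2 ≤ (∑' n, u n ^ 2) * (∑' n, v n ^ 2) := by
  have huv : Summable (fun n => u n * v n) := by
    apply Summable.of_nonneg_of_le (fun n => mul_nonneg (hu0 n) (hv0 n)) (fun n => ?_)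
      ((hu.add hv).mul_left (1/2))
    nlinarith [sq_nonneg (u n - v n)]
  have hpart : ∀ N : ℕ, (∑ n ∈ Finset.range N, u n * v n) ^ 2
      ≤ (∑' n, u n ^ 2) * (∑' n, v n ^ 2) := by
    intro N
    calc (∑ n ∈ Finset.range N, u n * v n) ^ 2
        ≤ (∑ n ∈ Finset.range N, u n ^ 2) * (∑ n ∈ Finset.range N, v n ^ 2) :=
          Finset.sum_mul_sq_le_sq_mul_sq _ _ _
      _ ≤ (∑' n, u n ^ 2) * (∑' n, v n ^ 2) :=
          mul_le_mul (Summable.sum_le_tsum _ (fun _ _ => sq_nonneg _) hu)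
            (Summable.sum_le_tsum _ (fun _ _ => sq_nonneg _) hv)
            (Finset.sum_nonneg (fun _ _ => sq_nonneg _)) (tsum_nonneg (fun _ => sq_nonneg _))
  have htend : Tendsto (fun N => (∑ n ∈ Finset.range N, u n * v n) ^ 2) atTop
      (𝓝 ((∑' n, u n * v n) ^ 2)) := (huv.hasSum.tendsto_sum_nat).pow 2
  exact le_of_tendsto' htend hpart

lemma hasSum_succ_geometric {x : ℝ} (h0 : 0 ≤ x) (h1 : x < 1) :
    HasSum (fun n : ℕ => ((n : ℝ) + 1) * x ^ n) (1 / (1 - x) ^ 2) := by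
  have hx : ‖x‖ < 1 := by rwa [Real.norm_eq_abs, abs_of_nonneg h0]
  have h2 := hasSum_coe_mul_geometric_of_norm_lt_one hx
  have h3 := hasSum_geometric_of_norm_lt_one hx
  have h4 := h2.add h3
  have hne : (1 : ℝ) - x ≠ 0 := by linarith
  have : x / (1 - x) ^ 2 + (1 - x)⁻¹ = 1 / (1 - x) ^ 2 := by
    field_simp
    ring
  rw [this] at h4
  convert h4 using 2 with n
  · rfl
  · ring

lemma int_pow_Ioo (k : ℕ) : ∫ r in Ioo (0:ℝ) 1, r ^ k = 1 / ((k : ℝ) + 1) := by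
  rw [← MeasureTheory.integral_Ioc_eq_integral_Ioo,
    ← intervalIntegral.integral_of_le zero_le_one, integral_pow]
  rw [one_pow, zero_pow (Nat.succ_ne_zero k)]
  push_cast
  ring

lemma J1_eval (n : ℕ) : ∫ r in Ioo (0:ℝ) 1, r * 1 * r ^ (2 * n) = 1 / (2 * (n:ℝ) + 2) := by
  rw [show (fun r : ℝ => r * 1 * r ^ (2 * n)) = fun r : ℝ => r ^ (2 * n + 1) from
    funext fun r => by ring]
  rw [int_pow_Ioo]
  push_cast
  ring_nf

lemma J2_eval (n : ℕ) : ∫ r in Ioo (0:ℝ) 1, r * (1 - r ^ 2) ^ 2 * r ^ (2 * n)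
    = 1 / (((n:ℝ) + 1) * ((n:ℝ) + 2) * ((n:ℝ) + 3)) := by
  rw [← MeasureTheory.integral_Ioc_eq_integral_Ioo,
    ← intervalIntegral.integral_of_le zero_le_one]
  have hcong : ∀ r : ℝ, r * (1 - r ^ 2) ^ 2 * r ^ (2 * n)
      = r ^ (2 * n + 1) - 2 * r ^ (2 * n + 3) + r ^ (2 * n + 5) := fun r => by ring
  rw [intervalIntegral.integral_congr (fun x _ => hcong x)]
  have i1 : IntervalIntegrable (fun x : ℝ => x ^ (2 * n + 1)) volume 0 1 :=
    (intervalIntegral.intervalIntegrable_pow _)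
  have i2 : IntervalIntegrable (fun x : ℝ => 2 * x ^ (2 * n + 3)) volume 0 1 :=
    (intervalIntegral.intervalIntegrable_pow _).const_mul 2
  have i3 : IntervalIntegrable (fun x : ℝ => x ^ (2 * n + 5)) volume 0 1 :=
    (intervalIntegral.intervalIntegrable_pow _)
  rw [intervalIntegral.integral_add (i1.sub i2) i3, intervalIntegral.integral_sub i1 i2,
    intervalIntegral.integral_const_mul, integral_pow, integral_pow, integral_pow]
  simp only [one_pow, zero_pow (Nat.succ_ne_zero _)]
  have h1 : (0:ℝ) < (n:ℝ) + 1 := by positivity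
  have h2 : (0:ℝ) < (n:ℝ) + 2 := by positivity
  have h3 : (0:ℝ) < (n:ℝ) + 3 := by positivity
  field_simp
  push_cast
  ring


noncomputable def tval (ψ : ℂ → ℂ) (n : ℕ) : ℝ := π * ‖pc ψ n‖ ^ 2 / ((n:ℝ) + 1)

noncomputable def wval (ψ : ℂ → ℂ) (n : ℕ) : ℝ :=
  2 * π * ((((n:ℝ) + 1) ^ 2) * ‖pc ψ (n+1)‖ ^ 2)
    * (1 / (((n:ℝ) + 1) * ((n:ℝ) + 2) * ((n:ℝ) + 3)))







lemma cmp_low (ψ : ℂ → ℂ) (n : ℕ) : tval ψ (n+1) ≤ 2 * wval ψ n := by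
  rw [tval, wval]
  set x := ‖pc ψ (n+1)‖ ^ 2 with hx
  have hx0 : 0 ≤ x := sq_nonneg _
  have h1 : (0:ℝ) < (n:ℝ) + 1 := by positivity
  have h2 : (0:ℝ) < (n:ℝ) + 2 := by positivity
  have h3 : (0:ℝ) < (n:ℝ) + 3 := by positivity
  have hcast : ((n+1 : ℕ) : ℝ) + 1 = (n:ℝ) + 2 := by push_cast; ring
  rw [hcast]
  have key : π / ((n:ℝ) + 2) ≤ 2 * (2 * π * (((n:ℝ)+1) ^ 2)
      * (1 / (((n:ℝ)+1) * ((n:ℝ)+2) * ((n:ℝ)+3)))) := by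
    rw [div_le_iff₀ h2]
    have hexp : 2 * (2 * π * (((n:ℝ)+1) ^ 2) * (1 / (((n:ℝ)+1) * ((n:ℝ)+2) * ((n:ℝ)+3))))
        = 4 * π * ((n:ℝ)+1) / (((n:ℝ)+2) * ((n:ℝ)+3)) := by
      field_simp
      ring
    rw [hexp, div_mul_eq_mul_div, le_div_iff₀ (by positivity)]
    nlinarith [pi_pos, mul_pos (mul_pos pi_pos h2) (show (0:ℝ) < 3*(n:ℝ)+1 by positivity)]
  calc π * x / ((n:ℝ)+2) = (π / ((n:ℝ)+2)) * x := by ring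
    _ ≤ (2 * (2 * π * (((n:ℝ)+1) ^ 2) * (1 / (((n:ℝ)+1) * ((n:ℝ)+2) * ((n:ℝ)+3))))) * x :=
        mul_le_mul_of_nonneg_right key hx0
    _ = 2 * (2 * π * ((((n:ℝ)+1) ^ 2) * x) * (1 / (((n:ℝ)+1) * ((n:ℝ)+2) * ((n:ℝ)+3)))) := by
        ring

lemma cmp_up (ψ : ℂ → ℂ) (n : ℕ) : wval ψ n ≤ 2 * tval ψ (n+1) := by
  rw [tval, wval]
  set x := ‖pc ψ (n+1)‖ ^ 2 with hx
  have hx0 : 0 ≤ x := sq_nonneg _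
  have h1 : (0:ℝ) < (n:ℝ) + 1 := by positivity
  have h2 : (0:ℝ) < (n:ℝ) + 2 := by positivity
  have h3 : (0:ℝ) < (n:ℝ) + 3 := by positivity
  have hcast : ((n+1 : ℕ) : ℝ) + 1 = (n:ℝ) + 2 := by push_cast; ring
  rw [hcast]
  have key : 2 * π * (((n:ℝ)+1) ^ 2) * (1 / (((n:ℝ)+1) * ((n:ℝ)+2) * ((n:ℝ)+3)))
      ≤ 2 * (π / ((n:ℝ)+2)) := by
    have hexp : 2 * π * (((n:ℝ)+1) ^ 2) * (1 / (((n:ℝ)+1) * ((n:ℝ)+2) * ((n:ℝ)+3)))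
        = 2 * π * ((n:ℝ)+1) / (((n:ℝ)+2) * ((n:ℝ)+3)) := by
      field_simp
    rw [hexp, div_le_iff₀ (by positivity)]
    have hr : 2 * (π / ((n:ℝ)+2)) * (((n:ℝ)+2) * ((n:ℝ)+3)) = 2 * π * ((n:ℝ)+3) := by
      field_simp
    rw [hr]
    nlinarith [pi_pos, mul_nonneg pi_pos.le (Nat.cast_nonneg n : (0:ℝ) ≤ (n:ℝ))]
  calc 2 * π * ((((n:ℝ)+1) ^ 2) * x) * (1 / (((n:ℝ)+1) * ((n:ℝ)+2) * ((n:ℝ)+3)))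
      = (2 * π * (((n:ℝ)+1) ^ 2) * (1 / (((n:ℝ)+1) * ((n:ℝ)+2) * ((n:ℝ)+3)))) * x := by ring
    _ ≤ (2 * (π / ((n:ℝ)+2))) * x := mul_le_mul_of_nonneg_right key hx0
    _ = 2 * (π * x / ((n:ℝ)+2)) := by ring

lemma pc_hasSum {ψ : ℂ → ℂ} (hψ : DifferentiableOn ℂ ψ (ball 0 1)) {z : ℂ}
    (hz : ‖z‖ < 1) : HasSum (fun n => pc ψ n * z ^ n) (ψ z) := by
  have h0 : (0:ℝ) ≤ ‖z‖ := norm_nonneg z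
  have h1 : ‖z‖ < 1 := hz
  have := (pc_spec hψ h0 h1).2 z.arg
  rwa [Complex.norm_mul_exp_arg_mul_I] at this

lemma normsq_tri (a b : ℂ) : ‖a‖ ^ 2 ≤ 2 * ‖a - b‖ ^ 2 + 2 * ‖b‖ ^ 2 := by
  have h : ‖a‖ ≤ ‖a - b‖ + ‖b‖ := by
    calc ‖a‖ = ‖a - b + b‖ := by ring_nf
      _ ≤ ‖a - b‖ + ‖b‖ := norm_add_le _ _
  have h2 : ‖a‖ ^ 2 ≤ (‖a - b‖ + ‖b‖) ^ 2 := pow_le_pow_left₀ (norm_nonneg a) h 2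
  nlinarith [sq_nonneg (‖a - b‖ - ‖b‖)]

lemma pointwise_bound {ψ : ℂ → ℂ} (hψ : DifferentiableOn ℂ ψ (ball 0 1))
    (hsum_t : Summable (tval ψ)) (hLr1 : (∑' n, tval ψ n) ≤ 1)
    {z : ℂ} (hz : z ∈ ball (0:ℂ) 1) :
    (1 - ‖z‖ ^ 2) ^ 2 * ‖ψ z ^ 2 / 2‖ ^ 2 ≤ 1 / (4 * π) * ‖ψ z‖ ^ 2 := by
  have hpi := pi_pos
  set Lr := ∑' n, tval ψ n with hLrdef
  have hρ1 : ‖z‖ < 1 := mem_ball_zero_iff.1 hz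
  have hρ0 : (0:ℝ) ≤ ‖z‖ := norm_nonneg z
  have hS1 := (pc_spec hψ hρ0 hρ1).1
  have hhs := pc_hasSum hψ hρ1
  have hterm : ∀ n : ℕ, ‖pc ψ n * z ^ n‖ = ‖pc ψ n‖ * ‖z‖ ^ n := fun n => by
    rw [norm_mul, norm_pow]
  have hS2 : Summable fun n => ‖pc ψ n * z ^ n‖ := hS1.congr (fun n => (hterm n).symm)
  have h1 : ‖ψ z‖ ≤ ∑' n, ‖pc ψ n‖ * ‖z‖ ^ n := by
    rw [← hhs.tsum_eq, ← tsum_congr hterm]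
    exact norm_tsum_le_tsum_norm hS2
  set u := fun n : ℕ => ‖pc ψ n‖ / Real.sqrt ((n:ℝ) + 1) with hu
  set v := fun n : ℕ => Real.sqrt ((n:ℝ) + 1) * ‖z‖ ^ n with hv
  have hsqrt : ∀ n : ℕ, 0 < Real.sqrt ((n:ℝ) + 1) := fun n => Real.sqrt_pos.2 (by positivity)
  have huv : ∀ n, u n * v n = ‖pc ψ n‖ * ‖z‖ ^ n := fun n => by
    rw [hu, hv]
    field_simp
  have hu2 : ∀ n, u n ^ 2 = ‖pc ψ n‖ ^ 2 / ((n:ℝ) + 1) := fun n => by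
    rw [hu, div_pow, Real.sq_sqrt (by positivity)]
  have hv2 : ∀ n, v n ^ 2 = ((n:ℝ) + 1) * (‖z‖ ^ 2) ^ n := fun n => by
    rw [hv, mul_pow, Real.sq_sqrt (by positivity), ← pow_mul, mul_comm n 2, pow_mul]
  have hU : Summable fun n => u n ^ 2 := by
    apply (hsum_t.mul_left (1/π)).congr
    intro n
    rw [hu2, tval]
    field_simp
  have hgeo := hasSum_succ_geometric (x := ‖z‖ ^ 2) (by positivity) (by nlinarith)
  have hV : Summable fun n => v n ^ 2 := hgeo.summable.congr (fun n => (hv2 n).symm)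
  have hUsum : ∑' n, u n ^ 2 = Lr / π := by
    have hLr2 : Lr = π * ∑' n, ‖pc ψ n‖ ^ 2 / ((n:ℝ) + 1) := by
      rw [hLrdef, ← tsum_mul_left]
      exact tsum_congr fun n => by rw [tval]; ring
    rw [tsum_congr hu2, hLr2]
    field_simp
  have hVsum : ∑' n, v n ^ 2 = 1 / (1 - ‖z‖ ^ 2) ^ 2 := by
    rw [tsum_congr hv2, hgeo.tsum_eq]
  have hCS := tsum_cauchy_schwarz (fun n => by positivity) (fun n => by positivity) hU hV
  rw [tsum_congr huv, hUsum, hVsum] at hCS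
  have h2 : ‖ψ z‖ ^ 2 ≤ Lr / π * (1 / (1 - ‖z‖ ^ 2) ^ 2) :=
    le_trans (pow_le_pow_left₀ (norm_nonneg _) h1 2) hCS
  have hc : (0:ℝ) < 1 - ‖z‖ ^ 2 := by nlinarith
  have key : ‖ψ z‖ ^ 2 * (1 - ‖z‖ ^ 2) ^ 2 ≤ Lr / π := by
    calc ‖ψ z‖ ^ 2 * (1 - ‖z‖ ^ 2) ^ 2
        ≤ (Lr / π * (1 / (1 - ‖z‖ ^ 2) ^ 2)) * (1 - ‖z‖ ^ 2) ^ 2 :=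
          mul_le_mul_of_nonneg_right h2 (by positivity)
      _ = Lr / π := by
          rw [mul_assoc, one_div, inv_mul_cancel₀ (pow_pos hc 2).ne', mul_one]
  have keyπ : π * (‖ψ z‖ ^ 2 * (1 - ‖z‖ ^ 2) ^ 2) ≤ Lr := by
    rw [← le_div_iff₀' hpi]
    exact key
  have hS : ‖ψ z ^ 2 / 2‖ = ‖ψ z‖ ^ 2 / 2 := by
    rw [norm_div, norm_pow]
    norm_num
  rw [hS, div_mul_eq_mul_div, le_div_iff₀ (by positivity : (0:ℝ) < 4 * π)]
  nlinarith [mul_le_mul_of_nonneg_right keyπ (sq_nonneg ‖ψ z‖), hLr1,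
    sq_nonneg ‖ψ z‖, sq_nonneg (‖ψ z‖ ^ 2), mul_nonneg (sq_nonneg ‖ψ z‖) (sq_nonneg ‖ψ z‖)]




lemma normsq_tri' (a b : ℂ) : ‖a - b‖ ^ 2 ≤ 2 * ‖a‖ ^ 2 + 2 * ‖b‖ ^ 2 := by
  have h : ‖a - b‖ ≤ ‖a‖ + ‖b‖ := norm_sub_le a b
  have h2 : ‖a - b‖ ^ 2 ≤ (‖a‖ + ‖b‖) ^ 2 := pow_le_pow_left₀ (norm_nonneg _) h 2
  nlinarith [sq_nonneg (‖a‖ - ‖b‖)]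



/-- Near the origin of the Bergman space `A²₁(𝔻)`, the weighted `L²` norm of the
"Schwarzian" combination `ψ' - ψ²/2` together with `|ψ(0)|²` is comparable to the
Bergman `L²` norm of `ψ`: there are `δ > 0` and `0 < c ≤ C` such that for every
holomorphic `ψ` on `𝔻` with `∬_𝔻 |ψ|² dA < δ`,
`c ∬_𝔻 |ψ|² ≤ ∬_𝔻 (1-|z|²)²|ψ'-ψ²/2|² + |ψ(0)|² ≤ C ∬_𝔻 |ψ|²`. -/
theorem stmt10 :
    ∃ δ > (0 : ℝ), ∃ c C : ℝ, 0 < c ∧ c ≤ C ∧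
      ∀ ψ : ℂ → ℂ, DifferentiableOn ℂ ψ (ball (0 : ℂ) 1) →
        (∫⁻ z in ball (0 : ℂ) 1, ENNReal.ofReal (‖ψ z‖ ^ 2)) < ENNReal.ofReal δ →
        (ENNReal.ofReal c * ∫⁻ z in ball (0 : ℂ) 1, ENNReal.ofReal (‖ψ z‖ ^ 2)) ≤
            (∫⁻ z in ball (0 : ℂ) 1,
              ENNReal.ofReal ((1 - ‖z‖ ^ 2) ^ 2 * ‖deriv ψ z - ψ z ^ 2 / 2‖ ^ 2)) +
              ENNReal.ofReal (‖ψ 0‖ ^ 2) ∧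
          (∫⁻ z in ball (0 : ℂ) 1,
              ENNReal.ofReal ((1 - ‖z‖ ^ 2) ^ 2 * ‖deriv ψ z - ψ z ^ 2 / 2‖ ^ 2)) +
              ENNReal.ofReal (‖ψ 0‖ ^ 2) ≤
            ENNReal.ofReal C * ∫⁻ z in ball (0 : ℂ) 1, ENNReal.ofReal (‖ψ z‖ ^ 2) := by
  have hpi := Real.pi_pos
  refine ⟨1, one_pos, 1/16, 8, by norm_num, by norm_num, ?_⟩
  intro ψ hψ hL
  set L := ∫⁻ z in ball (0:ℂ) 1, ENNReal.ofReal (‖ψ z‖ ^ 2) with hLdef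
  set Q := ∫⁻ z in ball (0:ℂ) 1,
      ENNReal.ofReal ((1 - ‖z‖ ^ 2) ^ 2 * ‖deriv ψ z - ψ z ^ 2 / 2‖ ^ 2) with hQdef
  set P := ENNReal.ofReal (‖ψ 0‖ ^ 2) with hPdef
  have hLne : L ≠ ⊤ := (hL.trans ENNReal.ofReal_lt_top).ne
  have hψd : DifferentiableOn ℂ (deriv ψ) (ball (0:ℂ) 1) :=
    ((hψ.analyticOnNhd isOpen_ball).deriv).differentiableOn
  -- Parseval for L
  have hLps : L = ∑' n, ENNReal.ofReal (tval ψ n) := by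
    have h1 := disk_parseval hψ (w := fun _ : ℝ => (1:ℝ)) continuous_const
      (fun x _ => zero_le_one)
    simp only [one_mul] at h1
    rw [hLdef, h1]
    refine tsum_congr fun n => ?_
    rw [J1_eval n, tval]
    congr 1
    have h2 : (0:ℝ) < (n:ℝ) + 1 := by positivity
    field_simp
  -- Parseval for W
  set W := ∫⁻ z in ball (0:ℂ) 1,
      ENNReal.ofReal ((1 - ‖z‖ ^ 2) ^ 2 * ‖deriv ψ z‖ ^ 2) with hWdef
  have hWps : W = ∑' n, ENNReal.ofReal (wval ψ n) := by
    have hwcont : Continuous fun x : ℝ => (1 - x ^ 2) ^ 2 :=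
      (continuous_const.sub (continuous_pow 2)).pow 2
    have h1 : W = ∑' n, ENNReal.ofReal (2 * π * ‖pc (deriv ψ) n‖ ^ 2
        * ∫ r in Ioo (0:ℝ) 1, r * (1 - r ^ 2) ^ 2 * r ^ (2 * n)) :=
      disk_parseval hψd (w := fun x : ℝ => (1 - x ^ 2) ^ 2) hwcont (fun x _ => sq_nonneg _)
    rw [h1]
    refine tsum_congr fun n => ?_
    rw [J2_eval n]
    congr 1
    have hpc : ‖pc (deriv ψ) n‖ = ((n:ℝ) + 1) * ‖pc ψ (n+1)‖ := by
      rw [pc_deriv, norm_mul]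
      congr 1
      rw [show ((n:ℂ) + 1) = ((n+1 : ℕ) : ℂ) from by push_cast; ring, Complex.norm_natCast]
      push_cast
      ring
    rw [wval, hpc]
    ring
  -- summability
  have htnn : ∀ n, 0 ≤ tval ψ n := fun n => by rw [tval]; positivity
  have hsum_t : Summable (tval ψ) := by
    have h1 : (∑' n, ENNReal.ofReal (tval ψ n)) ≠ ⊤ := by rw [← hLps]; exact hLne
    exact (ENNReal.summable_toReal h1).congr fun n => by
      rw [ENNReal.toReal_ofReal (htnn n)]
  have hLrnn : (0:ℝ) ≤ ∑' n, tval ψ n := tsum_nonneg htnn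
  have hLreq : L = ENNReal.ofReal (∑' n, tval ψ n) := by
    rw [hLps, ← ENNReal.ofReal_tsum_of_nonneg htnn hsum_t]
  have hLr1 : (∑' n, tval ψ n) ≤ 1 := by
    have h1 := hL
    rw [hLreq] at h1
    exact ((ENNReal.ofReal_lt_ofReal_iff_of_nonneg hLrnn).1 h1).le
  -- measurability
  have hball : MeasurableSet (ball (0:ℂ) 1) := measurableSet_ball
  have contD : ContinuousOn (deriv ψ) (ball (0:ℂ) 1) := hψd.continuousOn
  have contψ : ContinuousOn ψ (ball (0:ℂ) 1) := hψ.continuousOn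
  have contw : Continuous fun z : ℂ => (1 - ‖z‖ ^ 2) ^ 2 :=
    (continuous_const.sub (continuous_norm.pow 2)).pow 2
  have hmQ : AEMeasurable
      (fun z : ℂ => ENNReal.ofReal ((1 - ‖z‖ ^ 2) ^ 2 * ‖deriv ψ z - ψ z ^ 2 / 2‖ ^ 2))
      (volume.restrict (ball (0:ℂ) 1)) := by
    refine ContinuousOn.aemeasurable ?_ hball
    exact ENNReal.continuous_ofReal.comp_continuousOn
      (contw.continuousOn.mul ((contD.sub ((contψ.pow 2).div_const 2)).norm.pow 2))
  have hmT : AEMeasurable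
      (fun z : ℂ => ENNReal.ofReal ((1 - ‖z‖ ^ 2) ^ 2 * ‖ψ z ^ 2 / 2‖ ^ 2))
      (volume.restrict (ball (0:ℂ) 1)) := by
    refine ContinuousOn.aemeasurable ?_ hball
    exact ENNReal.continuous_ofReal.comp_continuousOn
      (contw.continuousOn.mul (((contψ.pow 2).div_const 2).norm.pow 2))
  set T := ∫⁻ z in ball (0:ℂ) 1,
      ENNReal.ofReal ((1 - ‖z‖ ^ 2) ^ 2 * ‖ψ z ^ 2 / 2‖ ^ 2) with hTdef
  -- T bound
  have hTle : T ≤ ENNReal.ofReal (1/(4*π)) * L := by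
    have hpt : ∀ᵐ z ∂(volume.restrict (ball (0:ℂ) 1)),
        ENNReal.ofReal ((1 - ‖z‖ ^ 2) ^ 2 * ‖ψ z ^ 2 / 2‖ ^ 2)
          ≤ ENNReal.ofReal (1/(4*π)) * ENNReal.ofReal (‖ψ z‖ ^ 2) := by
      filter_upwards [ae_restrict_mem hball] with z hz
      rw [← ENNReal.ofReal_mul (by positivity)]
      exact ENNReal.ofReal_le_ofReal (pointwise_bound hψ hsum_t hLr1 hz)
    calc T ≤ ∫⁻ z in ball (0:ℂ) 1,
          ENNReal.ofReal (1/(4*π)) * ENNReal.ofReal (‖ψ z‖ ^ 2) := lintegral_mono_ae hpt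
      _ = ENNReal.ofReal (1/(4*π)) * L := lintegral_const_mul' _ _ ENNReal.ofReal_ne_top
  -- W ≤ 2Q + 2T, Q ≤ 2W + 2T
  have hsum2 : ∀ f g : ℂ → ℝ≥0∞, AEMeasurable f (volume.restrict (ball (0:ℂ) 1)) →
      (∫⁻ z in ball (0:ℂ) 1, (2 * f z + 2 * g z))
        = 2 * (∫⁻ z in ball (0:ℂ) 1, f z) + 2 * ∫⁻ z in ball (0:ℂ) 1, g z := by
    intro f g hf
    rw [lintegral_add_left' (hf.const_mul 2), lintegral_const_mul' _ _ (by norm_num),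
      lintegral_const_mul' _ _ (by norm_num)]
  have hofr2 : ∀ a b : ℝ, 0 ≤ a → 0 ≤ b →
      ENNReal.ofReal (2 * a + 2 * b) = 2 * ENNReal.ofReal a + 2 * ENNReal.ofReal b := by
    intro a b ha hb
    rw [ENNReal.ofReal_add (by positivity) (by positivity), ENNReal.ofReal_mul (by norm_num),
      ENNReal.ofReal_mul (by norm_num)]
    norm_num
  have hW_le : W ≤ 2 * Q + 2 * T := by
    have hpt : ∀ᵐ z ∂(volume.restrict (ball (0:ℂ) 1)),
        ENNReal.ofReal ((1 - ‖z‖ ^ 2) ^ 2 * ‖deriv ψ z‖ ^ 2)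
          ≤ 2 * ENNReal.ofReal ((1 - ‖z‖ ^ 2) ^ 2 * ‖deriv ψ z - ψ z ^ 2 / 2‖ ^ 2)
            + 2 * ENNReal.ofReal ((1 - ‖z‖ ^ 2) ^ 2 * ‖ψ z ^ 2 / 2‖ ^ 2) := by
      filter_upwards with z
      rw [← hofr2 _ _ (by positivity) (by positivity)]
      apply ENNReal.ofReal_le_ofReal
      have h1 := normsq_tri (deriv ψ z) (ψ z ^ 2 / 2)
      have h2 : (0:ℝ) ≤ (1 - ‖z‖ ^ 2) ^ 2 := sq_nonneg _
      nlinarith [mul_le_mul_of_nonneg_left h1 h2]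
    calc W ≤ ∫⁻ z in ball (0:ℂ) 1,
          (2 * ENNReal.ofReal ((1 - ‖z‖ ^ 2) ^ 2 * ‖deriv ψ z - ψ z ^ 2 / 2‖ ^ 2)
            + 2 * ENNReal.ofReal ((1 - ‖z‖ ^ 2) ^ 2 * ‖ψ z ^ 2 / 2‖ ^ 2)) :=
          lintegral_mono_ae hpt
      _ = 2 * Q + 2 * T := hsum2 _ _ hmQ
  have hQ_le : Q ≤ 2 * W + 2 * T := by
    have hmW' : AEMeasurable
        (fun z : ℂ => ENNReal.ofReal ((1 - ‖z‖ ^ 2) ^ 2 * ‖deriv ψ z‖ ^ 2))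
        (volume.restrict (ball (0:ℂ) 1)) := by
      refine ContinuousOn.aemeasurable ?_ hball
      exact ENNReal.continuous_ofReal.comp_continuousOn
        (contw.continuousOn.mul (contD.norm.pow 2))
    have hpt : ∀ᵐ z ∂(volume.restrict (ball (0:ℂ) 1)),
        ENNReal.ofReal ((1 - ‖z‖ ^ 2) ^ 2 * ‖deriv ψ z - ψ z ^ 2 / 2‖ ^ 2)
          ≤ 2 * ENNReal.ofReal ((1 - ‖z‖ ^ 2) ^ 2 * ‖deriv ψ z‖ ^ 2)
            + 2 * ENNReal.ofReal ((1 - ‖z‖ ^ 2) ^ 2 * ‖ψ z ^ 2 / 2‖ ^ 2) := by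
      filter_upwards with z
      rw [← hofr2 _ _ (by positivity) (by positivity)]
      apply ENNReal.ofReal_le_ofReal
      have h1 := normsq_tri' (deriv ψ z) (ψ z ^ 2 / 2)
      have h2 : (0:ℝ) ≤ (1 - ‖z‖ ^ 2) ^ 2 := sq_nonneg _
      nlinarith [mul_le_mul_of_nonneg_left h1 h2]
    calc Q ≤ ∫⁻ z in ball (0:ℂ) 1,
          (2 * ENNReal.ofReal ((1 - ‖z‖ ^ 2) ^ 2 * ‖deriv ψ z‖ ^ 2)
            + 2 * ENNReal.ofReal ((1 - ‖z‖ ^ 2) ^ 2 * ‖ψ z ^ 2 / 2‖ ^ 2)) :=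
          lintegral_mono_ae hpt
      _ = 2 * W + 2 * T := hsum2 _ _ hmW'
  -- tsum comparisons
  have hsplit : L = ENNReal.ofReal (tval ψ 0) + ∑' n, ENNReal.ofReal (tval ψ (n+1)) := by
    rw [hLps]
    exact tsum_eq_zero_add' ENNReal.summable
  have ht0 : ENNReal.ofReal (tval ψ 0) = ENNReal.ofReal π * P := by
    rw [hPdef, ← ENNReal.ofReal_mul hpi.le]
    congr 1
    rw [tval, pc_zero]
    norm_num
  have hmul2 : ∀ x : ℝ, 0 ≤ x → ENNReal.ofReal (2 * x) = 2 * ENNReal.ofReal x := by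
    intro x hx
    rw [ENNReal.ofReal_mul (by norm_num)]
    norm_num
  have htail_W : ∑' n, ENNReal.ofReal (tval ψ (n+1)) ≤ 2 * W := by
    rw [hWps, ← ENNReal.tsum_mul_left]
    refine ENNReal.tsum_le_tsum fun n => ?_
    calc ENNReal.ofReal (tval ψ (n+1)) ≤ ENNReal.ofReal (2 * wval ψ n) :=
          ENNReal.ofReal_le_ofReal (cmp_low ψ n)
      _ = 2 * ENNReal.ofReal (wval ψ n) := hmul2 _ (by
          have := (cmp_low ψ n).trans' (htnn (n+1))
          linarith)
  have hW_le_tail : W ≤ 2 * ∑' n, ENNReal.ofReal (tval ψ (n+1)) := by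
    rw [hWps, ← ENNReal.tsum_mul_left]
    refine ENNReal.tsum_le_tsum fun n => ?_
    calc ENNReal.ofReal (wval ψ n) ≤ ENNReal.ofReal (2 * tval ψ (n+1)) :=
          ENNReal.ofReal_le_ofReal (cmp_up ψ n)
      _ = 2 * ENNReal.ofReal (tval ψ (n+1)) := hmul2 _ (by
          have := htnn (n+1)
          linarith)
  have htail_le_L : ∑' n, ENNReal.ofReal (tval ψ (n+1)) ≤ L := by
    rw [hsplit]
    exact le_add_self
  have hW_le_2L : W ≤ 2 * L := hW_le_tail.trans (mul_le_mul_right htail_le_L 2)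
  have hP_le_L : P ≤ L := by
    have h1 : ENNReal.ofReal π * P ≤ L := by
      rw [hsplit, ← ht0]
      exact le_self_add
    have h2 : P ≤ ENNReal.ofReal π * P := by
      conv_lhs => rw [← one_mul P]
      refine mul_le_mul_left ?_ P
      rw [ENNReal.one_le_ofReal]
      linarith [Real.pi_gt_three]
    exact h2.trans h1
  have hT_le_L : T ≤ L := by
    refine hTle.trans ?_
    calc ENNReal.ofReal (1/(4*π)) * L ≤ 1 * L := by
          refine mul_le_mul_left (ENNReal.ofReal_le_one.2 ?_) L
          rw [div_le_one (by positivity)]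
          linarith [Real.pi_gt_three]
      _ = L := one_mul L
  constructor
  · -- lower bound
    have hπ4 : ENNReal.ofReal π ≤ 4 := by
      rw [show (4:ℝ≥0∞) = ENNReal.ofReal 4 from (ENNReal.ofReal_ofNat 4).symm]
      exact ENNReal.ofReal_le_ofReal Real.pi_le_four
    have hstep : L ≤ 4 * Q + 4 * P + ENNReal.ofReal (1/2) * L := by
      calc L = ENNReal.ofReal (tval ψ 0) + ∑' n, ENNReal.ofReal (tval ψ (n+1)) := hsplit
        _ ≤ ENNReal.ofReal π * P + 2 * W := add_le_add (le_of_eq ht0) htail_W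
        _ ≤ ENNReal.ofReal π * P + 2 * (2 * Q + 2 * T) :=
            add_le_add_right (mul_le_mul_right hW_le 2) _
        _ = ENNReal.ofReal π * P + 4 * Q + 4 * T := by ring
        _ ≤ 4 * P + 4 * Q + 4 * (ENNReal.ofReal (1/(4*π)) * L) :=
            add_le_add (add_le_add_left (mul_le_mul_left hπ4 P) _)
              (mul_le_mul_right hTle 4)
        _ = 4 * Q + 4 * P + (4 * ENNReal.ofReal (1/(4*π))) * L := by ring
        _ ≤ 4 * Q + 4 * P + ENNReal.ofReal (1/2) * L := by
            refine add_le_add_right (mul_le_mul_left ?_ L) _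
            rw [show (4:ℝ≥0∞) = ENNReal.ofReal 4 from (ENNReal.ofReal_ofNat 4).symm,
              ← ENNReal.ofReal_mul (by norm_num)]
            refine ENNReal.ofReal_le_ofReal ?_
            rw [show (4 : ℝ) * (1/(4*π)) = 1/π from by field_simp]
            rw [div_le_div_iff₀ (by positivity) (by norm_num)]
            linarith [Real.pi_gt_three]
    have hhalf : ENNReal.ofReal (1/2) * L ≠ ⊤ :=
      ENNReal.mul_ne_top ENNReal.ofReal_ne_top hLne
    have hLsplit2 : L = ENNReal.ofReal (1/2) * L + ENNReal.ofReal (1/2) * L := by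
      rw [← add_mul, ← ENNReal.ofReal_add (by norm_num) (by norm_num)]
      norm_num
    have hcancel : ENNReal.ofReal (1/2) * L ≤ 4 * Q + 4 * P := by
      have hstep2 : ENNReal.ofReal (1/2) * L + ENNReal.ofReal (1/2) * L
          ≤ (4 * Q + 4 * P) + ENNReal.ofReal (1/2) * L := by
        rw [← hLsplit2]
        exact hstep
      exact (ENNReal.add_le_add_iff_right hhalf).1 hstep2
    calc ENNReal.ofReal (1/16) * L
        = ENNReal.ofReal (1/8) * (ENNReal.ofReal (1/2) * L) := by
          rw [← mul_assoc, ← ENNReal.ofReal_mul (by norm_num)]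
          norm_num
      _ ≤ ENNReal.ofReal (1/8) * (4 * Q + 4 * P) := mul_le_mul_right hcancel _
      _ = (ENNReal.ofReal (1/8) * 4) * (Q + P) := by ring
      _ ≤ 1 * (Q + P) := by
          refine mul_le_mul_left ?_ _
          rw [show (4:ℝ≥0∞) = ENNReal.ofReal 4 from (ENNReal.ofReal_ofNat 4).symm,
            ← ENNReal.ofReal_mul (by norm_num)]
          exact ENNReal.ofReal_le_one.2 (by norm_num)
      _ = Q + P := one_mul _
  · -- upper bound
    calc Q + P ≤ (2 * W + 2 * T) + P := add_le_add_left hQ_le _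
      _ ≤ (2 * (2 * L) + 2 * L) + L :=
          add_le_add (add_le_add (mul_le_mul_right hW_le_2L 2)
            (mul_le_mul_right hT_le_L 2)) hP_le_L
      _ = 7 * L := by ring
      _ ≤ ENNReal.ofReal 8 * L := by
          refine mul_le_mul_left ?_ L
          rw [show (7:ℝ≥0∞) = ENNReal.ofReal 7 from (ENNReal.ofReal_ofNat 7).symm]
          exact ENNReal.ofReal_le_ofReal (by norm_num)
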